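/- Let G be a finite group with a strongly embedded subgroup M. Then G acts transitively by conjugation on its set of involutions, and M acts transitively by conjugation on the set of involutions contained in M. -/

import Mathlib

set_option linter.unusedSectionVars false

section StronglyEmbeddedAux

variable {G : Type*} [Group G] [Finite G] {M : Subgroup G}

private lemma mem_conjSub2 {g x : G} :
    x ∈ Subgroup.map (MulAut.conj g).toMonoidHom M ↔ g⁻¹ * x * g ∈ M := by
  rw [Subgroup.mem_map_equiv]
  simp [MulAut.conj]

private lemma no_inv2
    (hstr : ∀ g : G, g ∉ M →
      Odd (Nat.card (M ⊓ Subgroup.map (MulAut.conj g).toMonoidHom M : Subgroup G)))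
    {a t : G} (ha : a ∉ M) (ht : t ∈ M) (hta : a⁻¹ * t * a ∈ M) (ht2 : t * t = 1) :
    t = 1 := by
  by_contra h1
  haveI : Fact (Nat.Prime 2) := ⟨Nat.prime_two⟩
  have hmem : t ∈ (M ⊓ Subgroup.map (MulAut.conj a).toMonoidHom M : Subgroup G) :=
    Subgroup.mem_inf.mpr ⟨ht, mem_conjSub2.mpr hta⟩
  have ho : orderOf (⟨t, hmem⟩ : (M ⊓ Subgroup.map (MulAut.conj a).toMonoidHom M : Subgroup G)) = 2 := by
    apply orderOf_eq_prime
    · apply Subtype.ext; show t ^ 2 = 1; rw [pow_two]; exact ht2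
    · exact fun h => h1 (congrArg Subtype.val h)
  have hdvd : (2:ℕ) ∣ Nat.card (M ⊓ Subgroup.map (MulAut.conj a).toMonoidHom M : Subgroup G) :=
    ho ▸ orderOf_dvd_natCard _
  have := hstr a ha
  rw [Nat.odd_iff] at this
  omega

private lemma fix_unique2
    (hstr : ∀ g : G, g ∉ M →
      Odd (Nat.card (M ⊓ Subgroup.map (MulAut.conj g).toMonoidHom M : Subgroup G)))
    {t x y : G} (ht2 : t * t = 1) (ht1 : t ≠ 1)
    (hx : x⁻¹ * t * x ∈ M) (hy : y⁻¹ * t * y ∈ M) : y⁻¹ * x ∈ M := by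
  by_contra ha
  set a := y⁻¹ * x with hadef
  have h1 : (y⁻¹ * t * y) ≠ 1 := by
    intro h
    apply ht1
    have := congrArg (fun w => y * w * y⁻¹) h
    simpa [mul_assoc] using this
  have h2 : a⁻¹ * (y⁻¹ * t * y) * a ∈ M := by
    have he : a⁻¹ * (y⁻¹ * t * y) * a = x⁻¹ * t * x := by rw [hadef]; group
    rwa [he]
  have h4 : (y⁻¹ * t * y) * (y⁻¹ * t * y) = 1 := by
    rw [show (y⁻¹ * t * y) * (y⁻¹ * t * y) = y⁻¹ * (t * t) * y by group, ht2]
    group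
  exact h1 (no_inv2 hstr ha hy h2 h4)


private lemma fix_exists (hodd : ¬ (2:ℕ) ∣ Nat.card (G ⧸ M)) {t : G} (ht2 : t * t = 1) :
    ∃ x : G, x⁻¹ * t * x ∈ M := by
  haveI : Fact (Nat.Prime 2) := ⟨Nat.prime_two⟩
  have hP : IsPGroup 2 (Subgroup.zpowers t) := by
    intro g
    refine ⟨1, ?_⟩
    obtain ⟨n, hn⟩ := g.2
    have key : ((g : G)) ^ (2:ℕ) = 1 := by
      have hn' : t ^ n = (g : G) := hn
      rw [← hn', ← zpow_natCast (t ^ n) 2, ← zpow_mul, mul_comm, zpow_mul,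
        zpow_natCast, pow_two, ht2, one_zpow]
    ext
    rw [pow_one]
    push_cast
    exact key
  obtain ⟨q, hq⟩ := hP.nonempty_fixed_point_of_prime_not_dvd_card (G ⧸ M) hodd
  obtain ⟨x, rfl⟩ := QuotientGroup.mk_surjective q
  have := hq ⟨t, Subgroup.mem_zpowers t⟩
  have h2 : ((t * x : G) : G ⧸ M) = (x : G ⧸ M) := this
  rw [QuotientGroup.eq] at h2
  refine ⟨x, ?_⟩
  have ht' : t⁻¹ = t := inv_eq_of_mul_eq_one_right ht2
  rw [mul_inv_rev, ht'] at h2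
  simpa [mul_assoc] using h2

private lemma conj_of_odd {i j : G} (hi : i * i = 1) (hj : j * j = 1)
    (hodd : Odd (orderOf (i * j))) : ∃ w, w * i * w⁻¹ = j := by
  set r := i * j with hr
  have hi' : i⁻¹ = i := inv_eq_of_mul_eq_one_right hi
  have hj' : j⁻¹ = j := inv_eq_of_mul_eq_one_right hj
  have hrinv : i * r * i⁻¹ = r⁻¹ := by
    rw [hi', hr, mul_inv_rev, hi', hj']
    rw [show i * (i * j) * i = (i * i) * (j * i) by group, hi, one_mul]
  obtain ⟨m, hm⟩ := hodd
  refine ⟨r ^ m, ?_⟩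
  have hc : i * r ^ m * i⁻¹ = (r ^ m)⁻¹ := by
    rw [← conj_pow, hrinv, inv_pow]
  have hinv : (r ^ m)⁻¹ = i * r ^ m * i⁻¹ := hc.symm
  calc r ^ m * i * (r ^ m)⁻¹ = r ^ m * i * (i * r ^ m * i⁻¹) := by rw [hinv]
    _ = r ^ m * (i * i) * r ^ m * i⁻¹ := by group
    _ = r ^ (m + m) * i⁻¹ := by rw [hi, mul_one, ← pow_add]
    _ = j := by
        have h2m : r ^ (m + m) = r⁻¹ := by
          have : r ^ (2 * m + 1) = 1 := hm ▸ pow_orderOf_eq_one r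
          have h2 : r ^ (m + m) * r = 1 := by
            rw [← pow_succ]
            convert this using 2
            ring
          exact eq_inv_of_mul_eq_one_left h2
        rw [h2m, hi', hr, mul_inv_rev, hi']
        rw [mul_assoc, hi, mul_one, hj']


private lemma samefix
    (hstr : ∀ g : G, g ∉ M →
      Odd (Nat.card (M ⊓ Subgroup.map (MulAut.conj g).toMonoidHom M : Subgroup G)))
    (hodd : ¬ (2:ℕ) ∣ Nat.card (G ⧸ M))
    {i j x y : G} (hi2 : i * i = 1) (hi1 : i ≠ 1) (hj2 : j * j = 1) (hj1 : j ≠ 1)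
    (hnc : ¬ IsConj i j) (hx : x⁻¹ * i * x ∈ M) (hy : y⁻¹ * j * y ∈ M) :
    y⁻¹ * x ∈ M := by
  set r := i * j with hr
  have hi' : i⁻¹ = i := inv_eq_of_mul_eq_one_right hi2
  have hj' : j⁻¹ = j := inv_eq_of_mul_eq_one_right hj2
  have hne : i ≠ j := fun h => hnc (h ▸ IsConj.refl i)
  have hr1 : r ≠ 1 := by
    intro h
    exact hne (by rw [← hj', eq_inv_of_mul_eq_one_left h])
  have hroddF : ¬ Odd (orderOf r) := by
    intro h
    obtain ⟨w, hw⟩ := conj_of_odd hi2 hj2 h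
    exact hnc (isConj_iff.mpr ⟨w, hw⟩)
  have hnpos : 0 < orderOf r := orderOf_pos r
  obtain ⟨k, hk⟩ : ∃ k, orderOf r = 2 * k := by
    have := Nat.not_odd_iff_even.mp hroddF
    rw [Nat.even_iff] at this
    exact ⟨orderOf r / 2, by omega⟩
  have hkpos : 0 < k := by omega
  set z := r ^ k with hz
  have hz2 : z * z = 1 := by
    rw [hz, ← pow_add]
    have : k + k = orderOf r := by omega
    rw [this, pow_orderOf_eq_one]
  have hz1 : z ≠ 1 := by
    intro h
    have := orderOf_dvd_of_pow_eq_one (n := k) (by rw [← hz]; exact h)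
    have := Nat.le_of_dvd hkpos this
    omega
  have hz' : z⁻¹ = z := inv_eq_of_mul_eq_one_right hz2
  -- i inverts r, j inverts r
  have hri : i * r * i⁻¹ = r⁻¹ := by
    rw [hi', hr, show i * (i * j) * i = (i * i) * (j * i) by group, hi2, one_mul, mul_inv_rev,
      hi', hj']
  have hrj : j * r * j⁻¹ = r⁻¹ := by
    rw [hj', hr, show j * (i * j) * j = j * i * (j * j) by group, hj2, mul_one, mul_inv_rev,
      hi', hj']
  have hzi : i * z * i⁻¹ = z := by rw [hz, ← conj_pow, hri, inv_pow, ← hz, hz']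
  have hzj : j * z * j⁻¹ = z := by rw [hz, ← conj_pow, hrj, inv_pow, ← hz, hz']
  obtain ⟨w, hw⟩ := fix_exists hodd hz2
  rw [hi'] at hzi
  rw [hj'] at hzj
  -- z fixes i*w and j*w
  have hwi : (i * w)⁻¹ * z * (i * w) ∈ M := by
    have he : (i * w)⁻¹ * z * (i * w) = w⁻¹ * (i⁻¹ * z * i) * w := by group
    rw [he, hi', hzi]
    exact hw
  have hwj : (j * w)⁻¹ * z * (j * w) ∈ M := by
    have he : (j * w)⁻¹ * z * (j * w) = w⁻¹ * (j⁻¹ * z * j) * w := by group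
    rw [he, hj', hzj]
    exact hw
  -- hence i and j fix the coset of w
  have hiw : w⁻¹ * i * w ∈ M := by
    have h := fix_unique2 hstr hz2 hz1 hwi hw
    rwa [show w⁻¹ * (i * w) = w⁻¹ * i * w by group] at h
  have hjw : w⁻¹ * j * w ∈ M := by
    have h := fix_unique2 hstr hz2 hz1 hwj hw
    rwa [show w⁻¹ * (j * w) = w⁻¹ * j * w by group] at h
  -- i fixes x and w, j fixes y and w
  have h1 : w⁻¹ * x ∈ M := fix_unique2 hstr hi2 hi1 hx hiw
  have h2 : w⁻¹ * y ∈ M := fix_unique2 hstr hj2 hj1 hy hjw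
  have := M.mul_mem (M.inv_mem h2) h1
  rwa [show (w⁻¹ * y)⁻¹ * (w⁻¹ * x) = y⁻¹ * x by group] at this


private lemma index_odd
    (hstr : ∀ g : G, g ∉ M →
      Odd (Nat.card (M ⊓ Subgroup.map (MulAut.conj g).toMonoidHom M : Subgroup G)))
    (hMeven : Even (Nat.card M)) :
    ¬ (2:ℕ) ∣ Nat.card (G ⧸ M) := by
  haveI : Fact (Nat.Prime 2) := ⟨Nat.prime_two⟩
  -- an involution u in M
  obtain ⟨u, hu⟩ : ∃ u : ↥M, orderOf u = 2 :=
    exists_prime_orderOf_dvd_card' 2 (even_iff_two_dvd.mp hMeven)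
  -- a Sylow 2-subgroup of M containing u
  have hzp : IsPGroup 2 (Subgroup.zpowers u) :=
    IsPGroup.of_card (((Nat.card_zpowers u).trans hu).trans (pow_one 2).symm)
  obtain ⟨S₀, hS₀le⟩ := hzp.exists_le_sylow
  have huS₀ : u ∈ S₀ := hS₀le (Subgroup.mem_zpowers u)
  set S : Subgroup G := Subgroup.map M.subtype S₀.toSubgroup with hSdef
  have hSM : S ≤ M := Subgroup.map_subtype_le _
  have hSp : IsPGroup 2 S := S₀.isPGroup'.map _
  set t : G := (u : G) with htdef
  have htS : t ∈ S := ⟨u, huS₀, rfl⟩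
  have htM : t ∈ M := u.2
  have ht2 : t * t = 1 := by
    have : (u : M) ^ 2 = 1 := by rw [← hu]; exact pow_orderOf_eq_one u
    have := congrArg (Subgroup.subtype M) this
    simpa [pow_two] using this
  have ht1 : t ≠ 1 := by
    intro h
    have : u = 1 := Subtype.ext h
    rw [this, orderOf_one] at hu
    omega
  obtain ⟨P, hSP⟩ := hSp.exists_le_sylow
  -- Claim : S = P
  have hkey : S = P.toSubgroup := by
    by_contra hne
    have hlt : S < P.toSubgroup := lt_of_le_of_ne hSP hne
    set K := P.toSubgroup with hK
    haveI : Group.IsNilpotent ↥K := P.isPGroup'.isNilpotent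
    have hnc := normalizerCondition_of_isNilpotent (G := ↥K)
    set S' : Subgroup ↥K := S.subgroupOf K with hS'
    have hS'lt : S' < ⊤ := by
      rw [lt_top_iff_ne_top]
      intro h
      exact hne (le_antisymm hSP (Subgroup.subgroupOf_eq_top.mp h))
    have hltn := hnc S' hS'lt
    obtain ⟨x, hxn, hxs⟩ := SetLike.exists_of_lt hltn
    set g : G := (x : G) with hgdef
    have hgK : g ∈ K := x.2
    have hgS : g ∉ S := by
      intro h
      exact hxs (Subgroup.mem_subgroupOf.mpr h)
    -- g normalizes S
    have hnorm : ∀ s : G, s ∈ S ↔ g * s * g⁻¹ ∈ S := by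
      intro s
      constructor
      · intro hs
        have hsK : s ∈ K := hSP hs
        have : (⟨s, hsK⟩ : ↥K) ∈ S' := Subgroup.mem_subgroupOf.mpr hs
        have h2 := (Subgroup.mem_normalizer_iff.mp hxn ⟨s, hsK⟩).mp this
        exact Subgroup.mem_subgroupOf.mp h2
      · intro hs
        have hsK : g * s * g⁻¹ ∈ K := hSP hs
        have hsK' : s ∈ K := by
          have := K.mul_mem (K.mul_mem (K.inv_mem hgK) hsK) hgK
          simpa [mul_assoc] using this
        have hmem : (⟨g * s * g⁻¹, hsK⟩ : ↥K) ∈ S' := Subgroup.mem_subgroupOf.mpr hs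
        have hxsx : x * ⟨s, hsK'⟩ * x⁻¹ ∈ S' := by
          convert hmem using 2
          rfl
        have := (Subgroup.mem_normalizer_iff.mp hxn ⟨s, hsK'⟩).mpr hxsx
        exact Subgroup.mem_subgroupOf.mp this
    by_cases hgM : g ∈ M
    · -- Q = S ⊔ zpowers g is a 2-subgroup of M strictly containing S
      have hzg : IsPGroup 2 (Subgroup.zpowers g) :=
        IsPGroup.to_le P.isPGroup' (Subgroup.zpowers_le.mpr hgK)
      have hznorm : Subgroup.zpowers g ≤ Subgroup.normalizer (S : Set G) := by
        rw [Subgroup.zpowers_le]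
        exact Subgroup.mem_normalizer_iff.mpr hnorm
      have hQp : IsPGroup 2 (S ⊔ Subgroup.zpowers g : Subgroup G) :=
        IsPGroup.to_sup_of_normal_left' hSp hzg hznorm
      set Q' : Subgroup ↥M := (S ⊔ Subgroup.zpowers g).comap M.subtype with hQ'
      have hQp' : IsPGroup 2 Q' := hQp.comap_subtype
      have hleQ : S₀.toSubgroup ≤ Q' := by
        intro v hv
        have : (v : G) ∈ S := ⟨v, hv, rfl⟩
        exact Subgroup.mem_comap.mpr (le_sup_left (α := Subgroup G) this)
      have heq : Q' = S₀.toSubgroup := S₀.3 hQp' hleQ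
      have hgQ' : (⟨g, hgM⟩ : ↥M) ∈ Q' := by
        apply Subgroup.mem_comap.mpr
        exact le_sup_right (α := Subgroup G) (Subgroup.mem_zpowers g)
      rw [heq] at hgQ'
      exact hgS ⟨⟨g, hgM⟩, hgQ', rfl⟩
    · -- strongly embedded contradiction
      have hta : g⁻¹ * t * g ∈ M := by
        have h1 : g⁻¹ * t * g ∈ S := by
          have := (hnorm (g⁻¹ * t * g)).mpr (by
            rw [show g * (g⁻¹ * t * g) * g⁻¹ = t by group]; exact htS)
          exact this
        exact hSM h1
      -- need a ∉ M with a⁻¹ t a ∈ M : use a = g... but no_inv' needs a⁻¹ t a; we have it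
      exact ht1 (no_inv2 hstr hgM htM hta ht2)
  -- now conclude oddness
  intro hdvd
  have hcard : Nat.card G = Nat.card (G ⧸ M) * Nat.card M :=
    Subgroup.card_eq_card_quotient_mul_card_subgroup M
  have hPcard : Nat.card P.toSubgroup = 2 ^ (Nat.card G).factorization 2 :=
    P.card_eq_multiplicity
  have hSdvd : Nat.card S ∣ Nat.card M := Subgroup.card_dvd_of_le hSM
  rw [hkey, hPcard] at hSdvd
  have h2 : (2:ℕ) ^ ((Nat.card G).factorization 2 + 1) ∣ Nat.card G := by
    calc (2:ℕ) ^ ((Nat.card G).factorization 2 + 1)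
        = 2 * 2 ^ ((Nat.card G).factorization 2) := by ring
      _ ∣ Nat.card (G ⧸ M) * Nat.card ↥M := Nat.mul_dvd_mul hdvd hSdvd
      _ = Nat.card G := hcard.symm
  exact Nat.pow_succ_factorization_not_dvd (Nat.card_pos (α := G)).ne' Nat.prime_two h2


end StronglyEmbeddedAux


/-- Let `G` be a finite group with a strongly embedded subgroup `M`. Then `G`
acts transitively by conjugation on its set of involutions, and `M` acts transitively by
conjugation on the set of involutions contained in `M`. -/
theorem stmt_15 (G : Type*) [Group G] [Finite G] (M : Subgroup G)
    (hM : M ≠ ⊤) (hMeven : Even (Nat.card M))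
    (hstr : ∀ g : G, g ∉ M →
      Odd (Nat.card (M ⊓ Subgroup.map (MulAut.conj g).toMonoidHom M : Subgroup G))) :
    (∀ i j : G, i * i = 1 → i ≠ 1 → j * j = 1 → j ≠ 1 → IsConj i j) ∧
    (∀ i j : G, i ∈ M → j ∈ M → i * i = 1 → i ≠ 1 → j * j = 1 → j ≠ 1 →
      ∃ m ∈ M, m * i * m⁻¹ = j) := by
  have hodd : ¬ (2:ℕ) ∣ Nat.card (G ⧸ M) := index_odd hstr hMeven
  have part1 : ∀ i j : G, i * i = 1 → i ≠ 1 → j * j = 1 → j ≠ 1 → IsConj i j := by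
    intro i j hi2 hi1 hj2 hj1
    by_contra hnc
    obtain ⟨x, hx⟩ := fix_exists hodd hi2
    obtain ⟨y, hy⟩ := fix_exists hodd hj2
    have key : ∀ g : G, (g * y)⁻¹ * x ∈ M := by
      intro g
      have hj'2 : (g * j * g⁻¹) * (g * j * g⁻¹) = 1 := by
        rw [show (g * j * g⁻¹) * (g * j * g⁻¹) = g * (j * j) * g⁻¹ by group, hj2]
        group
      have hj'1 : g * j * g⁻¹ ≠ 1 := by
        intro h
        apply hj1
        have := congrArg (fun w => g⁻¹ * w * g) h
        simpa [mul_assoc] using this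
      have hnc' : ¬ IsConj i (g * j * g⁻¹) := by
        intro h
        exact hnc (h.trans (isConj_iff.mpr ⟨g, rfl⟩).symm)
      have hy' : (g * y)⁻¹ * (g * j * g⁻¹) * (g * y) ∈ M := by
        rw [show (g * y)⁻¹ * (g * j * g⁻¹) * (g * y) = y⁻¹ * j * y by group]
        exact hy
      exact samefix hstr hodd hi2 hi1 hj'2 hj'1 hnc' hx hy'
    apply hM
    rw [Subgroup.eq_top_iff']
    intro h
    have := key (x * h⁻¹ * y⁻¹)
    rwa [show (x * h⁻¹ * y⁻¹ * y)⁻¹ * x = h by group] at this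
  refine ⟨part1, ?_⟩
  intro i j hiM hjM hi2 hi1 hj2 hj1
  obtain ⟨c, hc⟩ := isConj_iff.mp (part1 i j hi2 hi1 hj2 hj1)
  have h1 : (1:G)⁻¹ * j * 1 ∈ M := by simpa using hjM
  have h2 : c⁻¹ * j * c ∈ M := by
    rw [← hc, show c⁻¹ * (c * i * c⁻¹) * c = i by group]
    exact hiM
  have hcM := fix_unique2 hstr hj2 hj1 h2 h1
  exact ⟨c, by simpa using hcM, hc⟩
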